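/- Let A be a commutative ring, f ∈ A[T] monic of degree n ≥ 1, C = A[T]/(f), γ the image of T, and λ : C → A the A-linear functional with λ(γ^i) = δ_{i,n−1} for 0 ≤ i ≤ n−1. Then the C-linear map C → Hom_A(C, A) sending c to the functional x ↦ λ(c·x) is bijective; in particular Hom_A(C, A) is a free C-module of rank one with generator λ. -/

import Mathlib

open Polynomial

/-- **The dual of `A[T]/(f)` is free of rank one on the Tate functional.**
Let `A` be a commutative ring, `f ∈ A[T]` monic of degree `n ≥ 1`,
`C = A[T]/(f)`, `γ` the image of `T`, and `λ : C → A` the `A`-linear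
functional with `λ(γ^i) = δ_{i,n-1}` for `0 ≤ i ≤ n-1`.  Then the `C`-linear
map `C → Hom_A(C, A)`, `c ↦ (x ↦ λ (c * x))`, is bijective; in particular
`Hom_A(C, A)` is free of rank one over `C` with generator `λ`. -/
theorem dual_free_rank_one_on_lambda
    (A : Type*) [CommRing A] (f : A[X]) (hf : f.Monic) (hn : 1 ≤ f.natDegree)
    (lam : AdjoinRoot f →ₗ[A] A)
    (hlam : ∀ i : Fin f.natDegree,
      lam ((AdjoinRoot.root f) ^ (i : ℕ)) = if (i : ℕ) = f.natDegree - 1 then 1 else 0) :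
    Function.Bijective
      (fun c : AdjoinRoot f => lam.comp (LinearMap.mul A (AdjoinRoot f) c)) := by
  classical
  set n := f.natDegree with hn'
  set B := AdjoinRoot.powerBasis' hf with hB
  let b : Module.Basis (Fin n) A (AdjoinRoot f) := B.basis
  have hb : ∀ i : Fin n, b i = AdjoinRoot.root f ^ (i : ℕ) := fun i => B.basis_eq_pow i
  let Φ : AdjoinRoot f →ₗ[A] (AdjoinRoot f →ₗ[A] A) :=
    (LinearMap.mul A (AdjoinRoot f)).compr₂ lam
  have hΦ : (fun c : AdjoinRoot f => lam.comp (LinearMap.mul A (AdjoinRoot f) c)) = ⇑Φ := by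
    funext c; ext x; simp [Φ]
  rw [hΦ]
  -- value of `lam` on powers:
  have hpow : ∀ k : ℕ, k < n → lam (AdjoinRoot.root f ^ k) = if k = n - 1 then 1 else 0 := by
    intro k hk; exact hlam ⟨k, hk⟩
  -- the matrix of Φ with respect to b and its dual basis
  set M := LinearMap.toMatrix b b.dualBasis Φ with hM
  have hMij : ∀ i j : Fin n, M i j = lam (AdjoinRoot.root f ^ ((j : ℕ) + (i : ℕ))) := by
    intro i j
    rw [hM, LinearMap.toMatrix_apply, Module.Basis.dualBasis_repr]
    simp [Φ, hb, pow_add]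
  -- the matrix with reversed columns is lower triangular with units on the diagonal
  set N := M.submatrix id Fin.rev with hN
  have hNij : ∀ i j : Fin n, N i j = lam (AdjoinRoot.root f ^ ((n - 1 - (j : ℕ)) + (i : ℕ))) := by
    intro i j
    have h1 : N i j = M i (Fin.rev j) := rfl
    rw [h1, hMij]
    congr 2
    rw [Fin.val_rev]
    omega
  have hNdiag : ∀ i : Fin n, N i i = 1 := by
    intro i
    rw [hNij i i]
    have hival : (i : ℕ) < n := i.isLt
    have hval : (n - 1 - (i : ℕ)) + (i : ℕ) = n - 1 := by omega
    rw [hval, hpow (n - 1) (by omega), if_pos rfl]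
  have hNtri : N.BlockTriangular OrderDual.toDual := by
    intro i j hij
    have hij' : (i : ℕ) < (j : ℕ) := hij
    have hjval : (j : ℕ) < n := j.isLt
    rw [hNij i j, hpow _ (by omega), if_neg (by omega)]
  have hdetN : N.det = 1 := by
    rw [Matrix.det_of_lowerTriangular N hNtri]
    simp [hNdiag]
  have hdetM : IsUnit M.det := by
    have hMN : M = N.submatrix id (Fin.revPerm : Equiv.Perm (Fin n)) := by
      ext i j
      simp [hN, Matrix.submatrix_apply, Fin.rev_rev]
    rw [hMN, Matrix.det_permute', hdetN, mul_one]
    exact (Equiv.Perm.sign Fin.revPerm).isUnit.map (Int.castRingHom A)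
  exact (LinearEquiv.ofIsUnitDet hdetM).bijective
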